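/- arXiv:1303.0930 — 7 statements merged into one kernel-verified Lean document; each statement's English description precedes it below -/
import Mathlib

section
/- Let F be a field, D an m×p matrix over F and G' a k×r matrix over F. The linear map Φ : F^{p×k} → F^{m×k} × F^{p×r} defined by Φ(A) = (D·A, A·G') has rank equal to rank(D)·k + (p − rank(D))·rank(G'). -/
private lemma stmt_1_arith (d n g l X : ℕ) (h : X + n * l = (d + n) * (g + l)) :
    X = d * (g + l) + n * g := by
  have : (d + n) * (g + l) = d * (g + l) + n * g + n * l := by ring
  omega

/-- The linear map `Φ : F^{p×k} → F^{m×k} × F^{p×r}`,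
`Φ(A) = (D·A, A·G')`, has rank `rank(D)·k + (p − rank(D))·rank(G')`. -/
theorem stmt_1 {m p k r : ℕ} {F : Type*} [Field F]
    (D : Matrix (Fin m) (Fin p) F) (G' : Matrix (Fin k) (Fin r) F)
    (Φ : Matrix (Fin p) (Fin k) F →ₗ[F]
      Matrix (Fin m) (Fin k) F × Matrix (Fin p) (Fin r) F)
    (hΦ : ∀ A : Matrix (Fin p) (Fin k) F, Φ A = (D * A, A * G')) :
    Module.finrank F (LinearMap.range Φ) = D.rank * k + (p - D.rank) * G'.rank := by
  classical
  set K := LinearMap.ker (Matrix.toLin' D) with hK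
  set W := LinearMap.range (Matrix.toLin' G') with hW
  -- The comparison map from Hom(F^k/W, K) to matrices
  let T : (((Fin k → F) ⧸ W) →ₗ[F] K) →ₗ[F] Matrix (Fin p) (Fin k) F :=
    { toFun := fun χ => LinearMap.toMatrix' (K.subtype ∘ₗ χ ∘ₗ W.mkQ)
      map_add' := by
        intro χ₁ χ₂
        rw [LinearMap.add_comp, LinearMap.comp_add, map_add]
      map_smul' := by
        intro c χ
        rw [LinearMap.smul_comp, LinearMap.comp_smul, map_smul]
        rfl }
  have hTinj : Function.Injective T := by
    intro χ₁ χ₂ h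
    have h2 := congrArg Matrix.toLin' h
    simp only [T, LinearMap.coe_mk, AddHom.coe_mk, Matrix.toLin'_toMatrix'] at h2
    apply Submodule.linearMap_qext
    exact LinearMap.ext fun v => Subtype.ext (LinearMap.congr_fun h2 v)
  have hrange : LinearMap.range T = LinearMap.ker Φ := by
    apply le_antisymm
    · rintro _ ⟨χ, rfl⟩
      rw [LinearMap.mem_ker, hΦ]
      have hχ : Matrix.toLin' (T χ) = K.subtype ∘ₗ χ ∘ₗ W.mkQ := by
        simp only [T, LinearMap.coe_mk, AddHom.coe_mk, Matrix.toLin'_toMatrix']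
      have h1 : D * T χ = 0 := by
        apply Matrix.toLin'.injective
        rw [Matrix.toLin'_mul, hχ, map_zero]
        exact LinearMap.ext fun v => (χ (W.mkQ v)).2
      have h2 : T χ * G' = 0 := by
        apply Matrix.toLin'.injective
        rw [Matrix.toLin'_mul, hχ, map_zero]
        refine LinearMap.ext fun x => ?_
        have hx : W.mkQ (Matrix.toLin' G' x) = 0 := by
          rw [Submodule.mkQ_apply, Submodule.Quotient.mk_eq_zero]
          exact ⟨x, rfl⟩
        have h0 : (Submodule.Quotient.mk (G'.mulVec x) : (Fin k → F) ⧸ W) = 0 := by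
          simpa [Matrix.toLin'_apply] using hx
        simp [LinearMap.comp_apply, Matrix.toLin'_apply, h0]
      simp [h1, h2, Prod.ext_iff]
    · intro A hA
      rw [LinearMap.mem_ker, hΦ, Prod.ext_iff] at hA
      obtain ⟨hD, hG⟩ := hA
      have h1 : ∀ v, Matrix.toLin' A v ∈ K := by
        intro v
        rw [hK, LinearMap.mem_ker]
        have := congrArg (fun M => Matrix.toLin' M v) hD
        simpa [Matrix.toLin'_mul] using this
      have h2 : ∀ x ∈ W, Matrix.toLin' A x = 0 := by
        rintro _ ⟨x, rfl⟩
        have := congrArg (fun M => Matrix.toLin' M x) hG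
        simpa [Matrix.toLin'_mul] using this
      refine ⟨Submodule.liftQ W ((Matrix.toLin' A).codRestrict K h1)
        (fun x hx => Subtype.ext (by simpa using h2 x hx)), ?_⟩
      have : K.subtype ∘ₗ (Submodule.liftQ W ((Matrix.toLin' A).codRestrict K h1)
          (fun x hx => Subtype.ext (by simpa using h2 x hx))) ∘ₗ W.mkQ
          = Matrix.toLin' A := by
        ext v
        simp [LinearMap.codRestrict]
      simp only [T, LinearMap.coe_mk, AddHom.coe_mk, this, LinearMap.toMatrix'_toLin']
  -- dimensions
  have hWdim : Module.finrank F W = G'.rank := by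
    rw [hW, Matrix.toLin'_apply']; rfl
  have hKdim : Module.finrank F K + D.rank = p := by
    have := LinearMap.finrank_range_add_finrank_ker (Matrix.toLin' D)
    have hr : Module.finrank F (LinearMap.range (Matrix.toLin' D)) = D.rank := by
      rw [Matrix.toLin'_apply']; rfl
    rw [hr, Module.finrank_pi, Fintype.card_fin, ← hK] at this
    omega
  have hQdim : Module.finrank F ((Fin k → F) ⧸ W) + G'.rank = k := by
    have := Submodule.finrank_quotient_add_finrank W
    rwa [hWdim, Module.finrank_pi, Fintype.card_fin] at this
  have hkerdim : Module.finrank F (LinearMap.ker Φ)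
      = (k - G'.rank) * (p - D.rank) := by
    rw [← hrange, LinearMap.finrank_range_of_inj hTinj, Module.finrank_linearMap]
    have h1 : Module.finrank F ((Fin k → F) ⧸ W) = k - G'.rank := by omega
    have h2 : Module.finrank F K = p - D.rank := by omega
    rw [h1, h2]
  have hRN := LinearMap.finrank_range_add_finrank_ker Φ
  rw [hkerdim, Module.finrank_matrix, Module.finrank_self, mul_one,
    Fintype.card_fin, Fintype.card_fin] at hRN
  have hd : D.rank ≤ p := D.rank_le_width
  have hg : G'.rank ≤ k := G'.rank_le_height
  set X := Module.finrank F (LinearMap.range Φ) with hX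
  set n := p - D.rank with hn
  set l := k - G'.rank with hl
  have hp : p = D.rank + n := by omega
  have hk : k = G'.rank + l := by omega
  have key : X + n * l = (D.rank + n) * (G'.rank + l) := by
    rw [← hp, ← hk, mul_comm n l]; exact hRN
  have := stmt_1_arith D.rank n G'.rank l X key
  rw [this, ← hk]
end

section
/- Let F be a field, D an m×p matrix over F and G' a k×r matrix over F. Let v ∈ F^p be a row vector that does not lie in the row space of D, and let w ∈ F^k be a column vector that does not lie in the column space of G'. Then the linear map from T = {A ∈ F^{p×k} : D·A = 0 and A·G' = 0} to F sending A to v·A·w is surjective. -/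
/-- if the row vector `v` is not in the row space of `D` and the
column vector `w` is not in the column space of `G'`, then the map
`A ↦ v·A·w` from `T = {A : D·A = 0, A·G' = 0}` to `F` is surjective. -/
theorem stmt_3 {m p k r : ℕ} {F : Type*} [Field F]
    (D : Matrix (Fin m) (Fin p) F) (G' : Matrix (Fin k) (Fin r) F)
    (v : Fin p → F) (hv : v ∉ Submodule.span F (Set.range fun i : Fin m => D i))
    (w : Fin k → F)
    (hw : w ∉ Submodule.span F (Set.range fun j : Fin r => G'.transpose j)) :
    ∀ y : F, ∃ A : Matrix (Fin p) (Fin k) F,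
      D * A = 0 ∧ A * G' = 0 ∧ dotProduct v (A.mulVec w) = y := by
  intro y
  obtain ⟨f, hfv, hf0⟩ := Submodule.exists_dual_map_eq_bot_of_notMem hv inferInstance
  obtain ⟨g, hgw, hg0⟩ := Submodule.exists_dual_map_eq_bot_of_notMem hw inferInstance
  have hfD : ∀ i, f (D i) = 0 := by
    intro i
    have : f (D i) ∈ Submodule.map f (Submodule.span F
        (Set.range fun i : Fin m => D i)) :=
      Submodule.mem_map_of_mem (Submodule.subset_span ⟨i, rfl⟩)
    simpa [hf0] using this
  have hgG : ∀ j, g (G'.transpose j) = 0 := by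
    intro j
    have : g (G'.transpose j) ∈ Submodule.map g (Submodule.span F
        (Set.range fun j : Fin r => G'.transpose j)) :=
      Submodule.mem_map_of_mem (Submodule.subset_span ⟨j, rfl⟩)
    simpa [hg0] using this
  set a : Fin p → F := fun i => f (fun j => if i = j then 1 else 0) with ha
  set b : Fin k → F := fun i => g (fun j => if i = j then 1 else 0) with hb
  have hfa : ∀ x, f x = ∑ i, x i * a i := by
    intro x
    simpa [mul_comm] using f.pi_apply_eq_sum_univ x
  have hgb : ∀ x, g x = ∑ i, x i * b i := by
    intro x
    simpa [mul_comm] using g.pi_apply_eq_sum_univ x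
  set c : F := y / (f v * g w) with hc
  refine ⟨Matrix.of fun i j => c * a i * b j, ?_, ?_, ?_⟩
  · ext i j
    have := hfD i
    rw [hfa] at this
    simp only [Matrix.mul_apply, Matrix.of_apply, Matrix.zero_apply]
    calc ∑ l, D i l * (c * a l * b j) = (c * b j) * ∑ l, D i l * a l := by
          rw [Finset.mul_sum]; apply Finset.sum_congr rfl; intros; ring
      _ = 0 := by rw [this, mul_zero]
  · ext i j
    have := hgG j
    rw [hgb] at this
    simp only [Matrix.mul_apply, Matrix.of_apply, Matrix.zero_apply]
    calc ∑ l, (c * a i * b l) * G' l j = (c * a i) * ∑ l, G'.transpose j l * b l := by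
          rw [Finset.mul_sum]; apply Finset.sum_congr rfl; intros; simp [Matrix.transpose]; ring
      _ = 0 := by rw [this, mul_zero]
  · have hfv' : f v = ∑ i, v i * a i := hfa v
    have hgw' : g w = ∑ i, w i * b i := hgb w
    have : dotProduct v ((Matrix.of fun i j => c * a i * b j).mulVec w)
        = c * (f v * g w) := by
      simp only [dotProduct, Matrix.mulVec, Matrix.of_apply, hfv', hgw',
        Finset.mul_sum, Finset.sum_mul, dotProduct]
      rw [Finset.sum_comm]
      apply Finset.sum_congr rfl; intros
      apply Finset.sum_congr rfl; intros
      ring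
    rw [this, hc]
    field_simp
end

section
/- Let F be a finite field, D an m×p matrix over F and G' a k×r matrix over F. Let v ∈ F^p be a row vector not in the row space of D and w ∈ F^k a column vector not in the column space of G'. Fix C0 ∈ F^{m×k} and B0 ∈ F^{p×r}, and suppose the solution set S = {A ∈ F^{p×k} : D·A = C0 and A·G' = B0} is nonempty. Then for every y ∈ F, the number of A ∈ S with v·A·w = y equals |S|/|F|; in particular all values in F are attained equally often. -/
open Matrix

lemma exists_dual_vec {n N : ℕ} {F : Type*} [Field F]
    (rows : Fin N → (Fin n → F)) (v : Fin n → F)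
    (hv : v ∉ Submodule.span F (Set.range rows)) :
    ∃ x : Fin n → F, (∀ i, dotProduct (rows i) x = 0) ∧ dotProduct v x = 1 := by
  set W := Submodule.span F (Set.range rows)
  have hq : W.mkQ v ≠ 0 := by
    simpa [Submodule.Quotient.mk_eq_zero] using hv
  obtain ⟨φ, hφ⟩ : ∃ φ : Module.Dual F (_ ⧸ W), φ (W.mkQ v) ≠ 0 := by
    by_contra h
    push_neg at h
    exact hq ((Module.forall_dual_apply_eq_zero_iff F _).mp h)
  set ψ : (Fin n → F) →ₗ[F] F := (φ (W.mkQ v))⁻¹ • (φ ∘ₗ W.mkQ)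
  have hψ0 : ∀ u ∈ W, ψ u = 0 := by
    intro u hu
    simp [ψ, (Submodule.Quotient.mk_eq_zero W).mpr hu]
  have hψv : ψ v = 1 := by
    simp only [ψ, LinearMap.smul_apply, LinearMap.comp_apply, smul_eq_mul]
    exact inv_mul_cancel₀ hφ
  have key : ∀ u : Fin n → F, dotProduct u (fun j => ψ (Pi.single j (1:F))) = ψ u := by
    intro u
    have hu : u = ∑ j, (u j) • (Pi.single j (1:F) : Fin n → F) := by
      funext t; simp [Pi.single_apply, Finset.sum_apply, mul_comm]
    conv_rhs => rw [hu]
    simp [dotProduct, map_sum]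
  refine ⟨fun j => ψ (Pi.single j (1:F)), fun i => ?_, ?_⟩
  · rw [key]; exact hψ0 _ (Submodule.subset_span ⟨i, rfl⟩)
  · rw [key, hψv]


/-- over a finite field `F`, if `v` is not in the row space of `D`,
`w` is not in the column space of `G'`, and the solution set
`S = {A : D·A = C0, A·G' = B0}` is nonempty, then for every `y ∈ F` the number
of `A ∈ S` with `v·A·w = y` equals `|S|/|F|` (stated multiplicatively:
`#fiber · |F| = |S|`), so all values of `F` are attained equally often. -/
theorem stmt_4 {m p k r : ℕ} {F : Type*} [Field F] [Fintype F]
    (D : Matrix (Fin m) (Fin p) F) (G' : Matrix (Fin k) (Fin r) F)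
    (v : Fin p → F) (hv : v ∉ Submodule.span F (Set.range fun i : Fin m => D i))
    (w : Fin k → F)
    (hw : w ∉ Submodule.span F (Set.range fun j : Fin r => G'.transpose j))
    (C0 : Matrix (Fin m) (Fin k) F) (B0 : Matrix (Fin p) (Fin r) F)
    (hne : ∃ A : Matrix (Fin p) (Fin k) F, D * A = C0 ∧ A * G' = B0) :
    ∀ y : F,
      Nat.card {A : Matrix (Fin p) (Fin k) F //
          (D * A = C0 ∧ A * G' = B0) ∧ dotProduct v (A.mulVec w) = y}
        * Fintype.card F
      = Nat.card {A : Matrix (Fin p) (Fin k) F // D * A = C0 ∧ A * G' = B0} := by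
  classical
  obtain ⟨x, hxD, hxv⟩ := exists_dual_vec (fun i : Fin m => D i) v hv
  obtain ⟨z, hzG, hzw⟩ := exists_dual_vec (fun j : Fin r => G'.transpose j) w hw
  set A0 : Matrix (Fin p) (Fin k) F := Matrix.of (fun i j => x i * z j) with hA0
  have hDA0 : D * A0 = 0 := by
    ext a j
    have : ∑ i, D a i * (x i * z j) = (dotProduct (D a) x) * z j := by
      simp [dotProduct, Finset.sum_mul, mul_assoc]
    simp [Matrix.mul_apply, hA0, this, hxD a]
  have hA0G : A0 * G' = 0 := by
    ext i b
    have : ∑ j, (x i * z j) * G' j b = x i * dotProduct (G'.transpose b) z := by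
      simp [dotProduct, Finset.mul_sum, Matrix.transpose_apply]
      congr 1; funext j; ring
    simp [Matrix.mul_apply, hA0, this, hzG b]
  have hval : dotProduct v (A0.mulVec w) = 1 := by
    have h1 : A0.mulVec w = fun i => x i * dotProduct w z := by
      funext i
      simp [Matrix.mulVec, dotProduct, hA0, Finset.mul_sum]
      congr 1; funext j; ring
    rw [h1]
    have : dotProduct v (fun i => x i * dotProduct w z)
        = dotProduct v x * dotProduct w z := by
      simp [dotProduct, Finset.sum_mul, mul_assoc]
    rw [this, hxv, hzw, one_mul]
  set P : Matrix (Fin p) (Fin k) F → Prop := fun A => D * A = C0 ∧ A * G' = B0 with hP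
  set f : Matrix (Fin p) (Fin k) F → F := fun A => dotProduct v (A.mulVec w) with hf
  have hPshift : ∀ A (c : F), P A → P (A + c • A0) := by
    rintro A c ⟨h1, h2⟩
    constructor
    · rw [Matrix.mul_add, Matrix.mul_smul, hDA0, smul_zero, add_zero, h1]
    · rw [Matrix.add_mul, Matrix.smul_mul, hA0G, smul_zero, add_zero, h2]
  have hfshift : ∀ A (c : F), f (A + c • A0) = f A + c := by
    intro A c
    simp only [hf, Matrix.add_mulVec, Matrix.smul_mulVec, dotProduct_add,
      dotProduct_smul, smul_eq_mul, hval, mul_one]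
  have hcard : ∀ y₁ y₂ : F,
      Nat.card {A // P A ∧ f A = y₁} = Nat.card {A // P A ∧ f A = y₂} := by
    intro y₁ y₂
    refine Nat.card_congr ⟨fun A => ⟨A.1 + (y₂ - y₁) • A0, hPshift _ _ A.2.1, ?_⟩,
      fun A => ⟨A.1 + (y₁ - y₂) • A0, hPshift _ _ A.2.1, ?_⟩, ?_, ?_⟩
    · rw [hfshift, A.2.2]; ring
    · rw [hfshift, A.2.2]; ring
    · rintro ⟨A, hA⟩
      apply Subtype.ext
      simp [add_assoc, ← add_smul]
    · rintro ⟨A, hA⟩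
      apply Subtype.ext
      simp [add_assoc, ← add_smul]
  intro y
  rw [Nat.card_eq_fintype_card, Nat.card_eq_fintype_card]
  have hsig : Fintype.card {A // P A} = ∑ y' : F, Fintype.card {A // P A ∧ f A = y'} := by
    rw [← Fintype.card_congr (Equiv.sigmaFiberEquiv (fun A : {A // P A} => f A.1)),
      Fintype.card_sigma]
    congr 1; funext y'
    exact Fintype.card_congr (Equiv.subtypeSubtypeEquivSubtypeInter P (fun A => f A = y'))
  have hconst : ∀ y' : F,
      Fintype.card {A // P A ∧ f A = y'} = Fintype.card {A // P A ∧ f A = y} := by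
    intro y'
    rw [← Nat.card_eq_fintype_card, ← Nat.card_eq_fintype_card]
    exact hcard y' y
  rw [hsig]
  simp only [hconst, Finset.sum_const, Finset.card_univ, smul_eq_mul]
  ring
end

section
/- Let q be a prime power and l a positive integer, let F_q be the finite field with q elements and F_{q^l} its extension of degree l. Let s_1, …, s_M, s ∈ F_{q^l} be M+1 elements that are linearly independent over F_q. Let S_M be the M×(M+1) matrix over F_{q^l} whose i-th row is (1, s_i, s_i^q, …, s_i^{q^{M−1}}), and set v = (1, s, s^q, …, s^{q^{M−1}}) ∈ F_{q^l}^{M+1}. Let C ⊆ F_{q^l}^V be a linear code with generator matrix G (k rows, V columns), let B ⊆ {1,…,V} be a set of size at most d(C⊥) − 2 and let i ∈ {1,…,V} with i ∉ B; let g_i be the i-th column of G and G_B the k×|B| submatrix of G formed by the columns indexed by B. Let H be any matrix of the form H = H'·S_M for some matrix H' over F_{q^l}, fix matrices C0, B0 of the appropriate sizes, and suppose the set S = {A ∈ F_{q^l}^{(M+1)×k} : H·A = C0 and A·G_B = B0} is nonempty. Then for every y ∈ F_{q^l}, the number of A ∈ S with v·A·g_i = y equals |S|/q^l. -/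
/-- The minimum distance of a (set of codewords of a) code: the least Hamming
weight of a nonzero codeword. -/
noncomputable def minDist {V : ℕ} {F : Type*} [Field F] (S : Set (Fin V → F)) : ℕ :=
  sInf {w | ∃ x ∈ S, x ≠ 0 ∧ (Function.support x).ncard = w}

/-- The dual code of a code `C ⊆ F^V`. -/
def dualCode {V : ℕ} {F : Type*} [Field F] (C : Set (Fin V → F)) : Set (Fin V → F) :=
  {x | ∀ c ∈ C, dotProduct x c = 0}

open Polynomial in
/-- Affine-Moore-type matrices of `F`-linearly independent elements are invertible. -/
lemma moore_isUnit {q M : ℕ} {F K : Type*} [Field F] [Fintype F] [Field K]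
    [Algebra F K] [Fintype K] (hq : Fintype.card F = q)
    (x : Fin (M + 1) → K) (hind : LinearIndependent F x)
    (T : Matrix (Fin (M + 1)) (Fin (M + 1)) K)
    (hT : ∀ i j, T i j = if (j : ℕ) = 0 then 1 else x i ^ q ^ ((j : ℕ) - 1)) :
    IsUnit T := by
  classical
  subst hq
  rw [← Matrix.mulVec_injective_iff_isUnit]
  have hker : ∀ u : Fin (M + 1) → K, T.mulVec u = 0 → u = 0 := by
    intro u hu
    set q := Fintype.card F with hqdef
    have hq2 : 2 ≤ q := Fintype.one_lt_card
    set p := ringChar F with hpdef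
    haveI : CharP F p := ringChar.charP F
    have hp : p.Prime := CharP.char_is_prime F p
    obtain ⟨n, -, hcard⟩ := FiniteField.card F p
    haveI : CharP K p := charP_of_injective_algebraMap (algebraMap F K).injective p
    haveI : ExpChar K p := .prime hp
    have hpow : ∀ (t : ℕ) (a b : K), (a + b) ^ q ^ t = a ^ q ^ t + b ^ q ^ t := by
      intro t a b
      have h : q ^ t = p ^ ((n : ℕ) * t) := by rw [pow_mul, ← hcard]
      rw [h]; exact add_pow_expChar_pow a b p (↑n * t)
    have hsmul : ∀ (t : ℕ) (a : F) (z : K), (a • z) ^ q ^ t = a • z ^ q ^ t := by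
      intro t a z
      rw [Algebra.smul_def, Algebra.smul_def, mul_pow, ← map_pow,
        FiniteField.pow_card_pow]
    have hrow : ∀ i : Fin (M + 1),
        u 0 + ∑ t : Fin M, u t.succ * x i ^ q ^ (t : ℕ) = 0 := by
      intro i
      have h := congrFun hu i
      rw [Matrix.mulVec, dotProduct, Fin.sum_univ_succ] at h
      simp only [hT, Fin.val_zero, if_true, Fin.val_succ, Nat.add_sub_cancel,
        Nat.succ_ne_zero, if_false, one_mul, Pi.zero_apply] at h
      rw [← h]
      congr 1
      exact Finset.sum_congr rfl fun t _ => by ring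
    by_cases hz : ∀ t : Fin M, u t.succ = 0
    · have h0 : u 0 = 0 := by have := hrow 0; simpa [hz] using this
      funext j
      exact Fin.cases h0 (fun t => hz t) j
    · exfalso
      push_neg at hz
      obtain ⟨t0, ht0⟩ := hz
      set f : K → K := fun z => ∑ t : Fin M, u t.succ * z ^ q ^ (t : ℕ) with hf
      have hfadd : ∀ a b, f (a + b) = f a + f b := by
        intro a b
        simp only [hf, hpow, mul_add, Finset.sum_add_distrib]
      have hfsmul : ∀ (a : F) (z : K), f (a • z) = a • f z := by
        intro a z
        simp only [hf, hsmul, Finset.smul_sum]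
        exact Finset.sum_congr rfl fun t _ => mul_smul_comm _ _ _
      have hfx : ∀ i, f (x i) = -(u 0) := fun i => eq_neg_of_add_eq_zero_right (hrow i)
      set y : Fin M → K := fun t => x t.castSucc - x (Fin.last M) with hy
      have hyind : LinearIndependent F y := by
        rw [Fintype.linearIndependent_iff]
        intro c hc t
        have hsum : ∑ j : Fin (M + 1),
            (Fin.snoc c (-(∑ r, c r)) : Fin (M + 1) → F) j • x j = 0 := by
          have h1 : ∑ t : Fin M, c t • y t = 0 := hc
          have h2 : ∑ t : Fin M, c t • y t
              = (∑ t : Fin M, c t • x t.castSucc) - (∑ r, c r) • x (Fin.last M) := by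
            simp only [hy, smul_sub]
            rw [Finset.sum_sub_distrib, Finset.sum_smul]
          rw [Fin.sum_univ_castSucc]
          simp only [Fin.snoc_castSucc, Fin.snoc_last, neg_smul]
          rw [← sub_eq_add_neg, ← h2, h1]
        have := Fintype.linearIndependent_iff.1 hind _ hsum t.castSucc
        simpa using this
      have hWker : Submodule.span F (Set.range y) ≤ LinearMap.ker
          ({ toFun := f, map_add' := hfadd, map_smul' := hfsmul } : K →ₗ[F] K) := by
        rw [Submodule.span_le]
        rintro _ ⟨t, rfl⟩
        simp only [SetLike.mem_coe, LinearMap.mem_ker, LinearMap.coe_mk, AddHom.coe_mk]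
        have h1 : f (y t) + f (x (Fin.last M)) = f (x t.castSucc) := by
          rw [← hfadd]; congr 1; simp [hy]
        rw [hfx, hfx] at h1
        linear_combination h1
      haveI : Fintype (Submodule.span F (Set.range y)) := Fintype.ofFinite _
      have hcardW : Fintype.card (Submodule.span F (Set.range y)) = q ^ M := by
        rw [Module.card_fintype (Module.Basis.span hyind)]
        simp [hqdef]
      set Q : K[X] := ∑ t : Fin M, C (u t.succ) * X ^ (q ^ (t : ℕ)) with hQ
      have hqinj : Function.Injective (fun t : ℕ => q ^ t) := fun a b h =>
        Nat.pow_right_injective hq2 h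
      have hQcoeff : Q.coeff (q ^ (t0 : ℕ)) = u t0.succ := by
        rw [hQ, Polynomial.finset_sum_coeff, Finset.sum_eq_single t0]
        · simp [Polynomial.coeff_C_mul, Polynomial.coeff_X_pow]
        · intro t _ hne
          simp only [Polynomial.coeff_C_mul, Polynomial.coeff_X_pow]
          rw [if_neg, mul_zero]
          exact fun h => hne (Fin.val_injective (hqinj h.symm))
        · simp
      have hQne : Q ≠ 0 := fun h => ht0 (by rw [← hQcoeff, h, Polynomial.coeff_zero])
      have hQdeg : Q.natDegree < q ^ M := by
        have h1 : Q.natDegree ≤ q ^ M - 1 := by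
          apply Polynomial.natDegree_sum_le_of_forall_le
          intro t _
          refine le_trans (Polynomial.natDegree_C_mul_X_pow_le _ _) ?_
          exact Nat.le_sub_one_of_lt (Nat.pow_lt_pow_right hq2 t.isLt)
        have h2 : 0 < q ^ M := Nat.pow_pos (by omega)
        omega
      have heval : ∀ z : K, Q.eval z = f z := by
        intro z
        rw [hQ, hf]
        simp [Polynomial.eval_finset_sum]
      have hroots : (Finset.univ.image
          (fun w : Submodule.span F (Set.range y) => (w : K))) ⊆ Q.roots.toFinset := by
        intro z hz
        simp only [Finset.mem_image] at hz
        obtain ⟨w, -, rfl⟩ := hz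
        rw [Multiset.mem_toFinset, Polynomial.mem_roots hQne]
        show Q.IsRoot _
        rw [Polynomial.IsRoot, heval]
        exact hWker w.2
      have hcardle : q ^ M ≤ Q.natDegree :=
        calc q ^ M = Fintype.card (Submodule.span F (Set.range y)) := hcardW.symm
          _ = (Finset.univ.image
              (fun w : Submodule.span F (Set.range y) => (w : K))).card := by
              rw [Finset.card_image_of_injective _ Subtype.val_injective, Finset.card_univ]
          _ ≤ Q.roots.toFinset.card := Finset.card_le_card hroots
          _ ≤ Multiset.card Q.roots := Q.roots.toFinset_card_le
          _ ≤ Q.natDegree := Q.card_roots'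
      omega
  intro u1 u2 h12
  have h := hker (u1 - u2) (by rw [Matrix.mulVec_sub, h12, sub_self])
  exact sub_eq_zero.1 h

/-- equidistribution of the label `v·A·g_i` over the solutions of the
coalition's system `H·A = C0`, `A·G_B = B0`, where `H = H'·S_M` for the Moore-type
matrix `S_M` of the `F_q`-linearly independent sent basis `s_1,…,s_M`,
`v = (1, s, s^q, …, s^{q^{M−1}})` for `s` making `s_1,…,s_M,s` linearly independent
over `F_q`, and `B` is a coalition of size `≤ d(C^⊥) − 2` not containing `i`. -/
theorem stmt_5 {q l M V k e : ℕ} {F K : Type*} [Field F] [Fintype F] [Field K]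
    [Algebra F K] (hq : Fintype.card F = q) (hl : Module.finrank F K = l)
    (hl0 : 0 < l)
    (σ : Fin M → K) (s : K)
    (hind : LinearIndependent F (Fin.snoc σ s : Fin (M + 1) → K))
    (SM : Matrix (Fin M) (Fin (M + 1)) K)
    (hSM : ∀ (i : Fin M) (j : Fin (M + 1)),
      SM i j = if (j : ℕ) = 0 then 1 else σ i ^ q ^ ((j : ℕ) - 1))
    (v : Fin (M + 1) → K)
    (hv : ∀ j : Fin (M + 1), v j = if (j : ℕ) = 0 then 1 else s ^ q ^ ((j : ℕ) - 1))
    (C : Submodule K (Fin V → K)) (G : Matrix (Fin k) (Fin V) K)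
    (hGind : LinearIndependent K (fun t : Fin k => G t))
    (hGspan : Submodule.span K (Set.range fun t : Fin k => G t) = C)
    (B : Finset (Fin V)) (i : Fin V) (hi : i ∉ B)
    (hB : B.card + 2 ≤ minDist (dualCode (C : Set (Fin V → K))))
    (H' : Matrix (Fin e) (Fin M) K)
    (C0 : Matrix (Fin e) (Fin k) K) (B0 : Matrix (Fin (M + 1)) {j // j ∈ B} K)
    (GB : Matrix (Fin k) {j // j ∈ B} K)
    (hGB : ∀ (t : Fin k) (j : {j // j ∈ B}), GB t j = G t j.1)
    (hne : ∃ A : Matrix (Fin (M + 1)) (Fin k) K, H' * SM * A = C0 ∧ A * GB = B0) :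
    ∀ y : K,
      Nat.card {A : Matrix (Fin (M + 1)) (Fin k) K //
          (H' * SM * A = C0 ∧ A * GB = B0) ∧
            dotProduct v (A.mulVec fun t : Fin k => G t i) = y} * q ^ l
        = Nat.card {A : Matrix (Fin (M + 1)) (Fin k) K //
            H' * SM * A = C0 ∧ A * GB = B0} := by
  classical
  intro y
  -- `K` is a finite field of cardinality `q ^ l`
  haveI : Module.Finite F K := Module.finite_of_finrank_pos (by rw [hl]; exact hl0)
  haveI : Finite K := Module.finite_of_finite F
  haveI : Fintype K := Fintype.ofFinite K
  have hcardK : Fintype.card K = q ^ l := by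
    rw [Module.card_fintype (Module.finBasis F K)]
    simp [hq, hl]
  -- Step A: find `u` with `SM *ᵥ u = 0` and `v ⬝ᵥ u = 1`
  set x : Fin (M + 1) → K := Fin.snoc σ s with hx
  set T : Matrix (Fin (M + 1)) (Fin (M + 1)) K :=
    Matrix.of fun i j => if (j : ℕ) = 0 then 1 else x i ^ q ^ ((j : ℕ) - 1) with hT
  have hTunit : IsUnit T := moore_isUnit hq x hind T (fun i j => rfl)
  obtain ⟨u, hu⟩ := Matrix.mulVec_surjective_iff_isUnit.2 hTunit
    (Pi.single (Fin.last M) (1 : K))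
  have hSMrow : ∀ (i : Fin M) (j : Fin (M + 1)), SM i j = T i.castSucc j := by
    intro i j
    rw [hSM]
    simp [hT, hx, Fin.snoc_castSucc]
  have hvrow : ∀ j : Fin (M + 1), v j = T (Fin.last M) j := by
    intro j
    rw [hv]
    simp [hT, hx, Fin.snoc_last]
  have hSMu : SM.mulVec u = 0 := by
    funext i
    have : (SM.mulVec u) i = (T.mulVec u) i.castSucc := by
      simp only [Matrix.mulVec, dotProduct]
      exact Finset.sum_congr rfl fun j _ => by rw [hSMrow]
    rw [this, hu, Pi.zero_apply, Pi.single_eq_of_ne (Fin.castSucc_lt_last i).ne]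
  have hvu : dotProduct v u = 1 := by
    have : dotProduct v u = (T.mulVec u) (Fin.last M) := by
      simp only [Matrix.mulVec, dotProduct]
      exact Finset.sum_congr rfl fun j _ => by rw [hvrow]
    rw [this, hu, Pi.single_eq_same]
  -- Step B: find a codeword row-combination vanishing on `B` but not at `i`
  have hw : ∃ w : Fin k → K,
      (∀ j ∈ B, Matrix.vecMul w G j = 0) ∧ Matrix.vecMul w G i ≠ 0 := by
    by_contra hcon
    push_neg at hcon
    -- every codeword vanishing on `B` vanishes at `i`
    have hcode : ∀ c ∈ C, (∀ j ∈ B, c j = 0) → c i = 0 := by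
      intro c hc hcB
      rw [← hGspan] at hc
      obtain ⟨w, rfl⟩ := (Submodule.mem_span_range_iff_exists_fun K).1 hc
      have hwc : ∀ j, (∑ t, w t • G t) j = Matrix.vecMul w G j := by
        intro j
        simp [Matrix.vecMul, dotProduct, Finset.sum_apply]
      rw [hwc]
      exact hcon w (fun j hj => by rw [← hwc]; exact hcB j hj)
    -- hence the evaluation at `i` is a combination of evaluations on `B`
    have hker : (⨅ b : {j // j ∈ B}, LinearMap.ker
          ((LinearMap.proj b.1).comp C.subtype : C →ₗ[K] K))
        ≤ LinearMap.ker ((LinearMap.proj i).comp C.subtype : C →ₗ[K] K) := by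
      intro c hc
      simp only [Submodule.mem_iInf, LinearMap.mem_ker, LinearMap.comp_apply,
        LinearMap.proj_apply, Submodule.coe_subtype] at hc ⊢
      exact hcode c.1 c.2 fun j hj => hc ⟨j, hj⟩
    have hmem := mem_span_of_iInf_ker_le_ker hker
    obtain ⟨lam, hlam⟩ := (Submodule.mem_span_range_iff_exists_fun K).1 hmem
    -- build a short dual codeword
    set xw : Fin V → K :=
      Pi.single i 1 - ∑ b : {j // j ∈ B}, lam b • (Pi.single (b : Fin V) (1 : K) : Fin V → K) with hxw
    have hxdual : xw ∈ dualCode (C : Set (Fin V → K)) := by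
      intro c hc
      have happ := congrArg (fun f => f ⟨c, hc⟩) hlam
      simp only [LinearMap.coe_sum, Finset.sum_apply, LinearMap.smul_apply,
        LinearMap.comp_apply, LinearMap.proj_apply, Submodule.coe_subtype,
        smul_eq_mul] at happ
      have sum_dp : dotProduct
          (∑ b : {j // j ∈ B}, lam b • (Pi.single (b : Fin V) (1 : K) : Fin V → K)) c
          = ∑ b : {j // j ∈ B}, lam b * c b.1 := by
        simp only [dotProduct, Finset.sum_apply, Pi.smul_apply, smul_eq_mul,
          Finset.sum_mul]
        rw [Finset.sum_comm]
        refine Finset.sum_congr rfl fun b _ => ?_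
        rw [Finset.sum_eq_single (b : Fin V)]
        · rw [Pi.single_eq_same, mul_one]
        · intro j _ hj
          rw [Pi.single_eq_of_ne hj, mul_zero, zero_mul]
        · intro h
          exact absurd (Finset.mem_univ _) h
      have hdp : dotProduct xw c
          = c i - ∑ b : {j // j ∈ B}, lam b * c b.1 := by
        rw [hxw, sub_dotProduct, single_dotProduct, one_mul, sum_dp]
      rw [hdp, ← happ, sub_self]
    have hxi : xw i = 1 := by
      simp only [hxw, Pi.sub_apply, Pi.single_eq_same, Finset.sum_apply,
        Pi.smul_apply, smul_eq_mul]
      have : ∀ b : {j // j ∈ B}, lam b * (Pi.single (b : Fin V) (1 : K) : Fin V → K) i = 0 := by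
        intro b
        rw [Pi.single_eq_of_ne (fun h => hi (by rw [h]; exact b.2)), mul_zero]
      rw [Finset.sum_congr rfl fun b _ => this b]
      simp
    have hxne : xw ≠ 0 := by
      intro h
      rw [h] at hxi
      simp at hxi
    have hsupp : Function.support xw ⊆ insert i (B : Set (Fin V)) := by
      intro j hj
      by_contra hjmem
      simp only [Set.mem_insert_iff, Finset.coe_insert, not_or] at hjmem
      apply hj
      simp only [hxw, Pi.sub_apply, Finset.sum_apply, Pi.smul_apply, smul_eq_mul]
      rw [Pi.single_eq_of_ne (Ne.symm (fun h => hjmem.1 h.symm))]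
      have : ∀ b : {j' // j' ∈ B}, lam b * (Pi.single (b : Fin V) (1 : K) : Fin V → K) j = 0 := by
        intro b
        rw [Pi.single_eq_of_ne (fun h => hjmem.2 (Finset.mem_coe.2 (by rw [h]; exact b.2))), mul_zero]
      rw [Finset.sum_congr rfl fun b _ => this b]
      simp
    have hncard : (Function.support xw).ncard ≤ B.card + 1 := by
      have h1 : (Function.support xw).ncard ≤ (insert i (B : Set (Fin V))).ncard :=
        Set.ncard_le_ncard hsupp (Set.toFinite _)
      have h2 : (insert i (B : Set (Fin V))).ncard = B.card + 1 := by
        rw [Set.ncard_insert_of_notMem (by simpa using hi) (Set.toFinite _),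
          Set.ncard_coe_finset]
      omega
    have hmin : minDist (dualCode (C : Set (Fin V → K))) ≤ (Function.support xw).ncard :=
      Nat.sInf_le ⟨xw, hxdual, hxne, rfl⟩
    omega
  obtain ⟨w0, hw0B, hw0i⟩ := hw
  -- normalize so that the value at `i` is `1`
  set w : Fin k → K := (Matrix.vecMul w0 G i)⁻¹ • w0 with hwdef
  have hwB : ∀ j ∈ B, Matrix.vecMul w G j = 0 := by
    intro j hj
    rw [hwdef, Matrix.smul_vecMul, Pi.smul_apply, hw0B j hj, smul_zero]
  have hwi : Matrix.vecMul w G i = 1 := by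
    rw [hwdef, Matrix.smul_vecMul, Pi.smul_apply, smul_eq_mul, inv_mul_cancel₀ hw0i]
  -- Step C: the translation matrix `A1`
  set A1 : Matrix (Fin (M + 1)) (Fin k) K := Matrix.of fun j t => u j * w t with hA1
  have hA1SM : SM * A1 = 0 := by
    ext it t
    simp only [Matrix.mul_apply, hA1, Matrix.of_apply, Matrix.zero_apply]
    have : ∑ j, SM it j * (u j * w t) = (∑ j, SM it j * u j) * w t := by
      rw [Finset.sum_mul]
      exact Finset.sum_congr rfl fun j _ => by ring
    rw [this]
    have : ∑ j, SM it j * u j = (SM.mulVec u) it := rfl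
    rw [this, hSMu, Pi.zero_apply, zero_mul]
  have h1 : H' * SM * A1 = 0 := by rw [Matrix.mul_assoc, hA1SM, Matrix.mul_zero]
  have h2 : A1 * GB = 0 := by
    ext j b
    simp only [Matrix.mul_apply, hA1, Matrix.of_apply, Matrix.zero_apply]
    have : ∑ t, u j * w t * GB t b = u j * Matrix.vecMul w G b.1 := by
      rw [Matrix.vecMul, dotProduct, Finset.mul_sum]
      exact Finset.sum_congr rfl fun t _ => by rw [hGB]; ring
    rw [this, hwB b.1 b.2, mul_zero]
  have h3 : dotProduct v (A1.mulVec fun t : Fin k => G t i) = 1 := by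
    have hAu : (A1.mulVec fun t : Fin k => G t i) = u := by
      funext j
      simp only [Matrix.mulVec, dotProduct, hA1, Matrix.of_apply]
      have : ∑ t, u j * w t * G t i = u j * Matrix.vecMul w G i := by
        rw [Matrix.vecMul, dotProduct, Finset.mul_sum]
        exact Finset.sum_congr rfl fun t _ => by ring
      rw [this, hwi, mul_one]
    rw [hAu, hvu]
  -- Step D: counting via translations by multiples of `A1`
  have key : ∀ (c : K) (A : Matrix (Fin (M + 1)) (Fin k) K),
      (H' * SM * (A + c • A1) = H' * SM * A)
      ∧ ((A + c • A1) * GB = A * GB)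
      ∧ dotProduct v ((A + c • A1).mulVec fun t : Fin k => G t i)
          = dotProduct v (A.mulVec fun t : Fin k => G t i) + c := by
    intro c A
    refine ⟨?_, ?_, ?_⟩
    · rw [Matrix.mul_add, Matrix.mul_smul, h1, smul_zero, add_zero]
    · rw [Matrix.add_mul, Matrix.smul_mul, h2, smul_zero, add_zero]
    · rw [Matrix.add_mulVec, Matrix.smul_mulVec, dotProduct_add,
        dotProduct_smul, h3, smul_eq_mul, mul_one]
  have e2 : {A : Matrix (Fin (M + 1)) (Fin k) K //
        (H' * SM * A = C0 ∧ A * GB = B0) ∧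
          dotProduct v (A.mulVec fun t : Fin k => G t i) = y}
      ≃ {A : Matrix (Fin (M + 1)) (Fin k) K //
        (H' * SM * A = C0 ∧ A * GB = B0) ∧
          dotProduct v (A.mulVec fun t : Fin k => G t i) = 0} :=
    { toFun := fun A => ⟨A.1 + (-y) • A1, by
        obtain ⟨⟨hA1', hA2'⟩, hA3'⟩ := A.2
        obtain ⟨k1, k2, k3⟩ := key (-y) A.1
        exact ⟨⟨k1.trans hA1', k2.trans hA2'⟩, by rw [k3, hA3']; ring⟩⟩
      invFun := fun A => ⟨A.1 + y • A1, by
        obtain ⟨⟨hA1', hA2'⟩, hA3'⟩ := A.2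
        obtain ⟨k1, k2, k3⟩ := key y A.1
        exact ⟨⟨k1.trans hA1', k2.trans hA2'⟩, by rw [k3, hA3']; ring⟩⟩
      left_inv := fun A => by
        apply Subtype.ext
        show A.1 + (-y) • A1 + y • A1 = A.1
        rw [add_assoc, ← add_smul, neg_add_cancel, zero_smul, add_zero]
      right_inv := fun A => by
        apply Subtype.ext
        show A.1 + y • A1 + (-y) • A1 = A.1
        rw [add_assoc, ← add_smul, add_neg_cancel, zero_smul, add_zero] }
  have e1 : {A : Matrix (Fin (M + 1)) (Fin k) K //
        H' * SM * A = C0 ∧ A * GB = B0}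
      ≃ {A : Matrix (Fin (M + 1)) (Fin k) K //
        (H' * SM * A = C0 ∧ A * GB = B0) ∧
          dotProduct v (A.mulVec fun t : Fin k => G t i) = 0} × K :=
    { toFun := fun A =>
        (⟨A.1 + (-(dotProduct v (A.1.mulVec fun t : Fin k => G t i))) • A1, by
          obtain ⟨hA1', hA2'⟩ := A.2
          obtain ⟨k1, k2, k3⟩ := key
            (-(dotProduct v (A.1.mulVec fun t : Fin k => G t i))) A.1
          exact ⟨⟨k1.trans hA1', k2.trans hA2'⟩, by rw [k3]; ring⟩⟩,
         dotProduct v (A.1.mulVec fun t : Fin k => G t i))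
      invFun := fun P => ⟨P.1.1 + P.2 • A1, by
        obtain ⟨⟨hA1', hA2'⟩, -⟩ := P.1.2
        obtain ⟨k1, k2, -⟩ := key P.2 P.1.1
        exact ⟨k1.trans hA1', k2.trans hA2'⟩⟩
      left_inv := fun A => by
        apply Subtype.ext
        show A.1 + _ • A1 + _ • A1 = A.1
        rw [add_assoc, ← add_smul, neg_add_cancel, zero_smul, add_zero]
      right_inv := fun P => by
        obtain ⟨⟨A', hA'⟩, c⟩ := P
        obtain ⟨k1, k2, k3⟩ := key c A'
        have hφ : dotProduct v ((A' + c • A1).mulVec fun t : Fin k => G t i)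
            = c := by rw [k3, hA'.2, zero_add]
        refine Prod.ext (Subtype.ext ?_) hφ
        show A' + c • A1 + _ • A1 = A'
        rw [hφ, add_assoc, ← add_smul, add_neg_cancel, zero_smul, add_zero] }
  rw [Nat.card_congr e2, Nat.card_congr e1, Nat.card_prod,
    Nat.card_eq_fintype_card (α := K), hcardK]
end

section
/- Let C ⊆ F^V be a linear code over a field F with generator matrix G, and fix i ∈ {1,…,V}. Call a set B ⊆ {1,…,V}\{i} qualified for i if the i-th column g_i of G lies in the F-span of the columns {g_j : j ∈ B}. Then the minimal (with respect to inclusion) qualified sets for i are exactly the sets of the form support(x) \ {i}, where x ranges over the codewords of C⊥ that are minimal with respect to i. -/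
/-- A codeword `x` of a code `S` is minimal with respect to the coordinate `i` if
`x_i = 1` and no other codeword of `S` with `i`-th component `1` has support
strictly contained in that of `x`. -/
def IsMinimalWrt {V : ℕ} {F : Type*} [Field F] (S : Set (Fin V → F)) (i : Fin V)
    (x : Fin V → F) : Prop :=
  x ∈ S ∧ x i = 1 ∧
    ∀ x' ∈ S, x' i = 1 → ¬ Function.support x' ⊂ Function.support x

section aux
variable {V k : ℕ} {F : Type*} [Field F]
    (C : Submodule F (Fin V → F)) (G : Matrix (Fin k) (Fin V) F)

/-- dual code membership in terms of columns. -/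
lemma dual_iff (hGspan : Submodule.span F (Set.range fun t : Fin k => G t) = C)
    (x : Fin V → F) :
    x ∈ dualCode (C : Set (Fin V → F)) ↔
      ∑ j, x j • (fun t : Fin k => G t j) = 0 := by
  constructor
  · intro hx
    funext t
    have ht : G t ∈ (C : Set (Fin V → F)) := by
      rw [← hGspan]
      exact Submodule.subset_span ⟨t, rfl⟩
    have := hx (G t) ht
    simpa [dotProduct, Finset.sum_apply, mul_comm] using this
  · intro hx c hc
    rw [← hGspan] at hc
    induction hc using Submodule.span_induction with
    | mem c hc =>
      obtain ⟨t, rfl⟩ := hc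
      have := congrFun hx t
      simpa [dotProduct, Finset.sum_apply, mul_comm] using this
    | zero => simp [dotProduct]
    | add a b _ _ ha hb => simp [dotProduct_add, ha, hb]
    | smul r a _ ha => simp [dotProduct_smul, ha]

/-- qualified ↔ exists dual codeword. -/
lemma qual_iff (hGspan : Submodule.span F (Set.range fun t : Fin k => G t) = C)
    (i : Fin V) (B : Set (Fin V)) (hiB : i ∉ B) :
    (fun t : Fin k => G t i) ∈
        Submodule.span F ((fun j : Fin V => fun t : Fin k => G t j) '' B) ↔
      ∃ x : Fin V → F, x ∈ dualCode (C : Set (Fin V → F)) ∧ x i = 1 ∧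
        Function.support x \ {i} ⊆ B := by
  set cols : Fin V → (Fin k → F) := fun j t => G t j with hcols
  constructor
  · intro h
    rw [Finsupp.mem_span_image_iff_linearCombination] at h
    obtain ⟨l, hl, hsum⟩ := h
    refine ⟨fun j => if j = i then 1 else -(l j), ?_, by simp, ?_⟩
    · rw [dual_iff C G hGspan]
      have hli : l i = 0 := by
        by_contra h0
        exact hiB (hl (Finsupp.mem_support_iff.mpr h0))
      have hlc : Finsupp.linearCombination F cols l = ∑ j, l j • cols j := by
        rw [Finsupp.linearCombination_apply, Finsupp.sum_fintype]
        simp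
      have hfun : ∀ j, (if j = i then (1:F) else -(l j)) = (if j = i then (1:F) else 0) - l j := by
        intro j
        by_cases hji : j = i
        · subst hji; simp [hli]
        · simp [hji]
      show ∑ j, (if j = i then (1:F) else -(l j)) • cols j = 0
      calc ∑ j, (if j = i then (1:F) else -(l j)) • cols j
          = ∑ j, ((if j = i then (1:F) else 0) • cols j - l j • cols j) := by
            refine Finset.sum_congr rfl fun j _ => ?_
            rw [hfun j, sub_smul]
        _ = (∑ j, (if j = i then (1:F) else 0) • cols j) - ∑ j, l j • cols j :=
            Finset.sum_sub_distrib _ _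
        _ = cols i - cols i := by
            rw [← hlc, hsum]
            congr 1
            simp [ite_smul]
        _ = 0 := sub_self _
    · intro j hj
      simp only [Set.mem_diff, Function.mem_support, Set.mem_singleton_iff] at hj
      obtain ⟨hj1, hj2⟩ := hj
      rw [if_neg hj2] at hj1
      have : l j ≠ 0 := by simpa using hj1
      exact hl (Finsupp.mem_support_iff.mpr this)
  · rintro ⟨x, hx, hxi, hsupp⟩
    rw [dual_iff C G hGspan] at hx
    have hsplit : ∑ j, x j • cols j
        = cols i + ∑ j ∈ Finset.univ.erase i, x j • cols j := by
      rw [← Finset.add_sum_erase _ _ (Finset.mem_univ i), hxi, one_smul]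
    have hx' : ∑ j, x j • cols j = 0 := hx
    have hkey : cols i = ∑ j ∈ Finset.univ.erase i, (-(x j)) • cols j := by
      have h0 : cols i + ∑ j ∈ Finset.univ.erase i, x j • cols j = 0 :=
        hsplit.symm.trans hx'
      have := eq_neg_of_add_eq_zero_left h0
      rw [this, ← Finset.sum_neg_distrib]
      exact Finset.sum_congr rfl fun j _ => (neg_smul _ _).symm
    show cols i ∈ Submodule.span F (cols '' B)
    rw [hkey]
    apply Submodule.sum_mem
    intro j hj
    rcases eq_or_ne (x j) 0 with h0 | h0
    · simp [h0]
    · apply Submodule.smul_mem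
      apply Submodule.subset_span
      refine ⟨j, hsupp ⟨h0, ?_⟩, rfl⟩
      simpa using (Finset.mem_erase.mp hj).1

end aux

/-- the minimal (w.r.t. inclusion) qualified sets for `i` (sets
`B ⊆ {1,…,V}\{i}` such that `g_i` lies in the span of the columns `{g_j : j ∈ B}`)
are exactly the sets `support(x) \ {i}` for `x` a codeword of `C^⊥` minimal with
respect to `i`. -/
theorem stmt_7 {V k : ℕ} {F : Type*} [Field F]
    (C : Submodule F (Fin V → F)) (G : Matrix (Fin k) (Fin V) F)
    (hGind : LinearIndependent F (fun t : Fin k => G t))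
    (hGspan : Submodule.span F (Set.range fun t : Fin k => G t) = C)
    (i : Fin V) :
    ∀ B : Set (Fin V),
      (i ∉ B ∧
        (fun t : Fin k => G t i) ∈
          Submodule.span F ((fun j : Fin V => fun t : Fin k => G t j) '' B) ∧
        ∀ B' : Set (Fin V), B' ⊂ B →
          (fun t : Fin k => G t i) ∉
            Submodule.span F ((fun j : Fin V => fun t : Fin k => G t j) '' B')) ↔
      ∃ x : Fin V → F, IsMinimalWrt (dualCode (C : Set (Fin V → F))) i x ∧
        B = Function.support x \ {i} := by
  intro B
  constructor
  · rintro ⟨hiB, hq, hmin⟩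
    obtain ⟨x, hxd, hxi, hsupp⟩ := (qual_iff C G hGspan i B hiB).mp hq
    have hixs : i ∈ Function.support x := by
      simp [Function.mem_support, hxi]
    have hB0q := (qual_iff C G hGspan i (Function.support x \ {i}) (by simp)).mpr
      ⟨x, hxd, hxi, subset_rfl⟩
    have hBeq : Function.support x \ {i} = B := by
      by_contra hne
      exact hmin _ ⟨hsupp, fun h => hne (le_antisymm hsupp h)⟩ hB0q
    refine ⟨x, ⟨hxd, hxi, ?_⟩, hBeq.symm⟩
    intro x' hx'd hx'i hss
    have hB'q := (qual_iff C G hGspan i (Function.support x' \ {i}) (by simp)).mpr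
      ⟨x', hx'd, hx'i, subset_rfl⟩
    refine hmin (Function.support x' \ {i}) ?_ hB'q
    rw [← hBeq]
    constructor
    · exact Set.diff_subset_diff_left hss.subset
    · intro hsub
      obtain ⟨j, hjx, hjx'⟩ := Set.exists_of_ssubset hss
      have hji : j ≠ i := by
        rintro rfl
        exact hjx' (by simp [Function.mem_support, hx'i])
      have : j ∈ Function.support x' \ {i} := hsub ⟨hjx, hji⟩
      exact hjx' this.1
  · rintro ⟨x, ⟨hxd, hxi, hmin⟩, rfl⟩
    have hixs : i ∈ Function.support x := by
      simp [Function.mem_support, hxi]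
    refine ⟨by simp, (qual_iff C G hGspan i _ (by simp)).mpr ⟨x, hxd, hxi, subset_rfl⟩, ?_⟩
    intro B' hB' hq'
    have hiB' : i ∉ B' := fun h => by simpa using hB'.subset h
    obtain ⟨x', hx'd, hx'i, hsupp'⟩ := (qual_iff C G hGspan i B' hiB').mp hq'
    refine hmin x' hx'd hx'i ⟨?_, ?_⟩
    · intro j hj
      rcases eq_or_ne j i with rfl | hji
      · exact hixs
      · exact ((hB'.subset (hsupp' ⟨hj, hji⟩)).1)
    · intro hsub
      obtain ⟨j, hjB, hjB'⟩ := Set.exists_of_ssubset hB'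
      have : j ∈ Function.support x' := hsub hjB.1
      exact hjB' (hsupp' ⟨this, hjB.2⟩)
end

section
/- Let C ⊆ F^V be a linear code over a field F with generator matrix G, fix i ∈ {1,…,V} and let B ⊆ {1,…,V}\{i}. Then the i-th column g_i of G does NOT lie in the F-span of the columns {g_j : j ∈ B} if and only if B ∪ {i} does not contain the support of any codeword of C⊥ that is minimal with respect to i. -/
/-- If some codeword with `i`-th coordinate `1` has support inside `T`, then some
codeword minimal w.r.t. `i` has support inside `T`. -/
lemma exists_minimalWrt {V : ℕ} {F : Type*} [Field F] (S : Set (Fin V → F)) (i : Fin V)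
    (T : Set (Fin V)) (h : ∃ x ∈ S, x i = 1 ∧ Function.support x ⊆ T) :
    ∃ x, IsMinimalWrt S i x ∧ Function.support x ⊆ T := by
  classical
  set P : Set (Fin V → F) := {x | x ∈ S ∧ x i = 1 ∧ Function.support x ⊆ T} with hP
  obtain ⟨x0, hx0S, hx0i, hx0T⟩ := h
  have hne : {n | ∃ x ∈ P, (Function.support x).ncard = n}.Nonempty :=
    ⟨_, x0, ⟨hx0S, hx0i, hx0T⟩, rfl⟩
  obtain ⟨x, hxP, hxcard⟩ := Nat.sInf_mem hne
  refine ⟨x, ⟨hxP.1, hxP.2.1, ?_⟩, hxP.2.2⟩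
  intro x' hx'S hx'i hss
  have hx'T : Function.support x' ⊆ T := hss.subset.trans hxP.2.2
  have hlt : (Function.support x').ncard < (Function.support x).ncard :=
    Set.ncard_lt_ncard hss (Set.toFinite _)
  have hmem : (Function.support x').ncard ∈ {n | ∃ x ∈ P, (Function.support x).ncard = n} :=
    ⟨x', ⟨hx'S, hx'i, hx'T⟩, rfl⟩
  have hle := Nat.sInf_le hmem
  omega

/-- `g_i` does NOT lie in the span of the columns `{g_j : j ∈ B}` iff
`B ∪ {i}` contains no support of a codeword of `C^⊥` minimal with respect to `i`. -/
theorem stmt_8 {V k : ℕ} {F : Type*} [Field F]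
    (C : Submodule F (Fin V → F)) (G : Matrix (Fin k) (Fin V) F)
    (hGind : LinearIndependent F (fun t : Fin k => G t))
    (hGspan : Submodule.span F (Set.range fun t : Fin k => G t) = C)
    (i : Fin V) (B : Set (Fin V)) (hi : i ∉ B) :
    (fun t : Fin k => G t i) ∉
        Submodule.span F ((fun j : Fin V => fun t : Fin k => G t j) '' B) ↔
      ¬ ∃ x : Fin V → F, IsMinimalWrt (dualCode (C : Set (Fin V → F))) i x ∧
          Function.support x ⊆ B ∪ {i} := by
  classical
  rw [not_iff_not]
  constructor
  · intro hmem
    rw [Finsupp.mem_span_image_iff_linearCombination] at hmem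
    obtain ⟨l, hl, hlsum⟩ := hmem
    have hli : l i = 0 := by
      by_contra h
      exact hi (hl (Finsupp.mem_support_iff.mpr h))
    have hkey : ∀ t, ∑ j, l j * G t j = G t i := by
      intro t
      have := congrFun hlsum t
      rw [Finsupp.linearCombination_apply,
        Finsupp.sum_fintype _ _ (fun j => by simp)] at this
      simpa using this
    set x0 : Fin V → F := fun j => if j = i then 1 else -(l j) with hx0
    have hx0i : x0 i = 1 := by simp [hx0]
    have hsupp : Function.support x0 ⊆ B ∪ {i} := by
      intro j hj
      by_cases hji : j = i
      · exact Or.inr hji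
      · left
        have hlj : l j ≠ 0 := by simpa [hx0, hji] using hj
        exact hl (Finsupp.mem_support_iff.mpr hlj)
    have hx0dual : x0 ∈ dualCode (C : Set (Fin V → F)) := by
      intro c hc
      rw [← hGspan] at hc
      induction hc using Submodule.span_induction with
      | mem c hc =>
        obtain ⟨t, rfl⟩ := hc
        have : dotProduct x0 (G t) = ∑ j, x0 j * G t j := rfl
        rw [this, ← Finset.add_sum_erase _ _ (Finset.mem_univ i)]
        have h2 : ∑ j ∈ Finset.univ.erase i, x0 j * G t j
            = ∑ j ∈ Finset.univ.erase i, -(l j * G t j) := by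
          refine Finset.sum_congr rfl fun j hj => ?_
          have hji : j ≠ i := (Finset.mem_erase.mp hj).1
          simp [hx0, hji, neg_mul]
        rw [h2, Finset.sum_neg_distrib, hx0i]
        have h3 : ∑ j ∈ Finset.univ.erase i, l j * G t j = ∑ j, l j * G t j := by
          rw [← Finset.add_sum_erase _ _ (Finset.mem_univ i), hli, zero_mul, zero_add]
        rw [h3, hkey t]
        ring
      | zero => simp
      | add c c' _ _ h1 h2 => rw [dotProduct_add, h1, h2, add_zero]
      | smul a c _ h1 => rw [dotProduct_smul, h1, smul_zero]
    exact exists_minimalWrt _ i (B ∪ {i}) ⟨x0, hx0dual, hx0i, hsupp⟩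
  · rintro ⟨x, ⟨hxdual, hxi, -⟩, hsupp⟩
    have hrow : ∀ t, ∑ j, x j * G t j = 0 := by
      intro t
      exact hxdual (G t) (by rw [← hGspan]; exact Submodule.subset_span ⟨t, rfl⟩)
    have hGi : (fun t : Fin k => G t i)
        = ∑ j ∈ Finset.univ.erase i, (-(x j)) • (fun t : Fin k => G t j) := by
      funext t
      have h := hrow t
      rw [← Finset.add_sum_erase _ _ (Finset.mem_univ i), hxi, one_mul] at h
      have : (∑ j ∈ Finset.univ.erase i, (-(x j)) • (fun t : Fin k => G t j)) t
          = ∑ j ∈ Finset.univ.erase i, -(x j * G t j) := by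
        rw [Finset.sum_apply]
        exact Finset.sum_congr rfl fun j _ => by simp [neg_mul]
      rw [this, Finset.sum_neg_distrib]
      linear_combination h
    rw [hGi]
    refine Submodule.sum_mem _ fun j hj => ?_
    by_cases hxj : x j = 0
    · simp [hxj]
    · have hjmem : j ∈ B ∪ {i} := hsupp hxj
      have hji : j ≠ i := (Finset.mem_erase.mp hj).1
      have hjB : j ∈ B := by
        rcases hjmem with h | h
        · exact h
        · exact absurd h hji
      exact Submodule.smul_mem _ _ (Submodule.subset_span ⟨j, hjB, rfl⟩)
end

section
/- Let q be a prime power and l a positive integer, let F_q be the finite field with q elements and F_{q^l} its extension of degree l. Let s_1, …, s_{M+1} ∈ F_{q^l} be linearly independent over F_q. Then the (M+1)×(M+1) matrix over F_{q^l} whose i-th row is (1, s_i, s_i^{q}, s_i^{q^2}, …, s_i^{q^{M−1}}) is invertible. -/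
open Polynomial in
/-- for `s_1, …, s_{M+1}` in the degree-`l` extension `K` of the
finite field `F` with `q` elements, linearly independent over `F`, the
`(M+1)×(M+1)` matrix whose `i`-th row is `(1, s_i, s_i^q, …, s_i^(q^(M−1)))`
is invertible. -/
theorem stmt_14 {q l M : ℕ} {F K : Type*} [Field F] [Fintype F] [Field K]
    [Algebra F K] (hq : Fintype.card F = q) (hl : Module.finrank F K = l)
    (hl0 : 0 < l) (s : Fin (M + 1) → K) (hs : LinearIndependent F s) :
    IsUnit (Matrix.of fun i j : Fin (M + 1) =>
      if (j : ℕ) = 0 then 1 else s i ^ q ^ ((j : ℕ) - 1)) := by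
  classical
  have hq2 : 2 ≤ q := hq ▸ Fintype.one_lt_card
  -- characteristic setup
  set p := ringChar F with hpdef
  haveI : CharP F p := ringChar.charP F
  haveI : CharP K p := charP_of_injective_algebraMap (algebraMap F K).injective p
  obtain ⟨n, hp, hcard⟩ := FiniteField.card F p
  haveI : ExpChar K p := ExpChar.prime hp
  rw [hq] at hcard
  -- Frobenius compatibility with F-linear combinations
  have hfrob : ∀ (m : ℕ) (a : Fin (M + 1) → F),
      (∑ i, a i • s i) ^ q ^ m = ∑ i, a i • s i ^ q ^ m := by
    intro m a
    have hqm : q ^ m = p ^ ((n : ℕ) * m) := by rw [pow_mul, ← hcard]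
    have he : ∀ x : K, iterateFrobenius K p ((n : ℕ) * m) x = x ^ q ^ m := by
      intro x; rw [iterateFrobenius_def, hqm]
    rw [← he, map_sum]
    refine Finset.sum_congr rfl fun i _ => ?_
    rw [he, Algebra.smul_def, Algebra.smul_def, mul_pow, ← map_pow]
    have : a i ^ q ^ m = a i := by rw [← hq]; exact FiniteField.pow_card_pow m (a i)
    rw [this]
  rw [Matrix.isUnit_iff_isUnit_det, isUnit_iff_ne_zero]
  intro hdet
  obtain ⟨v, hv0, hv⟩ := (Matrix.exists_mulVec_eq_zero_iff).mpr hdet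
  -- the row equations
  have hrow : ∀ i, v 0 + ∑ k : Fin M, v k.succ * s i ^ q ^ (k : ℕ) = 0 := by
    intro i
    have := congrFun hv i
    simp only [Matrix.mulVec, dotProduct, Matrix.of_apply, Pi.zero_apply] at this
    rw [Fin.sum_univ_succ] at this
    simpa [mul_comm] using this
  by_cases hvv : ∀ k : Fin M, v k.succ = 0
  · -- then v 0 = 0 and v = 0
    apply hv0
    have h0 : v 0 = 0 := by simpa [hvv] using hrow 0
    funext j
    refine Fin.cases h0 (fun k => hvv k) j
  push_neg at hvv
  obtain ⟨k₀, hk₀⟩ := hvv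
  have hM : 0 < M := k₀.pos
  -- the linearized polynomial
  set P : K[X] := C (v 0) + ∑ k : Fin M, C (v k.succ) * X ^ q ^ (k : ℕ) with hP
  have hqpow_inj : Function.Injective fun k : ℕ => q ^ k := Nat.pow_right_injective hq2
  have hPne : P ≠ 0 := by
    intro h
    apply hk₀
    have hne0 : q ^ (k₀ : ℕ) ≠ 0 := by positivity
    have hco : P.coeff (q ^ (k₀ : ℕ)) = v k₀.succ := by
      rw [hP, Polynomial.coeff_add, Polynomial.finset_sum_coeff]
      simp_rw [Polynomial.coeff_C_mul, Polynomial.coeff_X_pow]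
      rw [Polynomial.coeff_C, if_neg hne0, zero_add,
        Finset.sum_eq_single k₀ (fun k _ hk => ?_) (by simp)]
      · simp
      · have hne : q ^ (k₀ : ℕ) ≠ q ^ (k : ℕ) :=
          fun hh => hk (Fin.val_injective (hqpow_inj hh)).symm
        rw [if_neg hne, mul_zero]
    rw [h] at hco
    simpa using hco.symm
  have hdeg : P.natDegree ≤ q ^ (M - 1) := by
    rw [hP]
    refine (Polynomial.natDegree_add_le _ _).trans (max_le (by simp) ?_)
    refine Polynomial.natDegree_sum_le_of_forall_le _ _ fun k _ => ?_
    refine (Polynomial.natDegree_C_mul_le _ _).trans ?_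
    rw [Polynomial.natDegree_X_pow]
    exact Nat.pow_le_pow_right (by omega) (by omega)
  -- each normalized F-combination of the `s i` is a root of `P`
  have hroot : ∀ b : Fin M → F,
      P.IsRoot (∑ i, (Fin.cons (1 - ∑ k, b k) b : Fin (M + 1) → F) i • s i) := by
    intro b
    set a : Fin (M + 1) → F := Fin.cons (1 - ∑ k, b k) b with ha
    have hsum : ∑ i, a i = 1 := by
      rw [ha, Fin.sum_univ_succ]
      simp [sub_add_cancel]
    have heval : P.eval (∑ i, a i • s i)
        = v 0 + ∑ k : Fin M, v k.succ * (∑ i, a i • s i) ^ q ^ (k : ℕ) := by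
      simp [hP, Polynomial.eval_finset_sum]
    rw [Polynomial.IsRoot, heval]
    have : ∀ k : Fin M, v k.succ * (∑ i, a i • s i) ^ q ^ (k : ℕ)
        = ∑ i, a i • (v k.succ * s i ^ q ^ (k : ℕ)) := by
      intro k
      rw [hfrob, Finset.mul_sum]
      exact Finset.sum_congr rfl fun i _ => (mul_smul_comm _ _ _)
    simp_rw [this]
    rw [Finset.sum_comm]
    have : ∀ i, ∑ k : Fin M, a i • (v k.succ * s i ^ q ^ (k : ℕ)) = a i • (-(v 0)) := by
      intro i
      rw [← Finset.smul_sum]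
      congr 1
      linear_combination hrow i
    simp_rw [this]
    rw [← Finset.sum_smul, hsum, one_smul]
    ring
  -- injectivity of the parametrization
  have hinj : Function.Injective fun b : Fin M → F =>
      ∑ i, (Fin.cons (1 - ∑ k, b k) b : Fin (M + 1) → F) i • s i := by
    intro b b' hbb'
    have : ∑ i, ((Fin.cons (1 - ∑ k, b k) b : Fin (M + 1) → F) i
        - (Fin.cons (1 - ∑ k, b' k) b' : Fin (M + 1) → F) i) • s i = 0 := by
      simp only [sub_smul, Finset.sum_sub_distrib, hbb', sub_self]
    have hall := Fintype.linearIndependent_iff.mp hs _ this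
    funext k
    have := hall k.succ
    simpa [sub_eq_zero] using this
  -- counting roots
  have hsub : ∀ b : Fin M → F,
      (∑ i, (Fin.cons (1 - ∑ k, b k) b : Fin (M + 1) → F) i • s i) ∈ P.roots.toFinset := by
    intro b
    rw [Multiset.mem_toFinset, Polynomial.mem_roots hPne]
    exact hroot b
  have hcount : q ^ M ≤ P.roots.toFinset.card := by
    have := Finset.card_le_card_of_injOn _ (fun b _ => hsub b)
      (Function.Injective.injOn hinj) (s := (Finset.univ : Finset (Fin M → F)))
    simpa [Fintype.card_fun, hq] using this
  have : q ^ M ≤ q ^ (M - 1) :=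
    hcount.trans ((P.roots.toFinset_card_le).trans ((Polynomial.card_roots' P).trans hdeg))
  have : q ^ (M - 1) < q ^ M := Nat.pow_lt_pow_right hq2 (by omega)
  omega
end
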